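/- Let Φ(z) = az + b with |a| ≤ 1 and b ∈ ℂ, and suppose the composition operator C_Φ is bounded on H_E(ξ). Then C_Φ is an isometry on H_E(ξ) if and only if |a| = 1 and b = 0; moreover C_Φ is unitary if and only if |a| = 1 and b = 0. -/

import Mathlib

noncomputable section

open Filter

/-- `n`-th Taylor coefficient of `f` at `0`. -/
def heCoeff (f : ℂ → ℂ) (n : ℕ) : ℂ := iteratedDeriv n f 0 / (n.factorial : ℂ)

/-- Membership in the weighted Hardy space of entire functions `H_E(ξ)`. -/
def MemHE (ξ : ℕ → ℝ) (f : ℂ → ℂ) : Prop :=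
  Differentiable ℂ f ∧ Summable (fun n => ‖heCoeff f n‖ ^ 2 * (ξ n) ^ 2)

/-- Squared norm in `H_E(ξ)`. -/
def heNormSq (ξ : ℕ → ℝ) (f : ℂ → ℂ) : ℝ := ∑' n, ‖heCoeff f n‖ ^ 2 * (ξ n) ^ 2

/-- Inner product in `H_E(ξ)`. -/
def heInner (ξ : ℕ → ℝ) (f g : ℂ → ℂ) : ℂ :=
  ∑' n, heCoeff f n * (starRingEnd ℂ) (heCoeff g n) * ((ξ n : ℂ)) ^ 2

/-- `ξ` is an admissible weight sequence: positive with `ξ n ^ (1/n) → ∞`. -/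
def HEWeight (ξ : ℕ → ℝ) : Prop :=
  (∀ n, 0 < ξ n) ∧ Tendsto (fun n : ℕ => (ξ n) ^ ((1 : ℝ) / n)) atTop atTop

/-- An operator on functions is an isometry of `H_E(ξ)`. -/
def IsIsometryHE (ξ : ℕ → ℝ) (T : (ℂ → ℂ) → (ℂ → ℂ)) : Prop :=
  (∀ f, MemHE ξ f → MemHE ξ (T f)) ∧ ∀ f, MemHE ξ f → heNormSq ξ (T f) = heNormSq ξ f

/-- Unitary: an isometry of `H_E(ξ)` mapping `H_E(ξ)` onto itself. -/
def IsUnitaryHE (ξ : ℕ → ℝ) (T : (ℂ → ℂ) → (ℂ → ℂ)) : Prop :=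
  IsIsometryHE ξ T ∧ ∀ g, MemHE ξ g → ∃ f, MemHE ξ f ∧ T f = g

/-- Composition operator `C_Φ f = f ∘ Φ`. -/
def compOp (Φ : ℂ → ℂ) : (ℂ → ℂ) → (ℂ → ℂ) := fun f => f ∘ Φ

/-- Weighted composition operator `C_{Υ,Φ} f = Υ · (f ∘ Φ)`. -/
def wCompOp (Υ Φ : ℂ → ℂ) : (ℂ → ℂ) → (ℂ → ℂ) := fun f z => Υ z * f (Φ z)

/-- Reproducing kernel `K_p(z) = ∑ conj(p)^n z^n / ξ_n²`. -/
def heKernel (ξ : ℕ → ℝ) (p : ℂ) : ℂ → ℂ :=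
  fun z => ∑' n, (starRingEnd ℂ p) ^ n * z ^ n / ((ξ n : ℂ)) ^ 2

/-- Boundedness of an operator on `H_E(ξ)`. -/
def IsBoundedHE (ξ : ℕ → ℝ) (T : (ℂ → ℂ) → (ℂ → ℂ)) : Prop :=
  ∃ M > (0 : ℝ), ∀ f, MemHE ξ f → MemHE ξ (T f) ∧
    Real.sqrt (heNormSq ξ (T f)) ≤ M * Real.sqrt (heNormSq ξ f)

/-- Generalized weighted composition operator `D^p_{Φ,Υ} f = Υ · (f^{(p)} ∘ Φ)`. -/
def genWComp (p : ℕ) (Φ Υ : ℂ → ℂ) : (ℂ → ℂ) → (ℂ → ℂ) :=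
  fun f z => Υ z * iteratedDeriv p f (Φ z)

/-! ### Auxiliary lemmas -/

lemma iterZeroFun (k : ℕ) : iteratedDeriv k (fun _ : ℂ => (0:ℂ)) = fun _ => 0 := by
  induction k with
  | zero => simp
  | succ k ih => rw [iteratedDeriv_succ', deriv_const']; exact ih

lemma coeffDil (f : ℂ → ℂ) (hf : Differentiable ℂ f) (a : ℂ) (n : ℕ) :
    heCoeff (fun z => f (a * z)) n = a ^ n * heCoeff f n := by
  unfold heCoeff
  rw [iteratedDeriv_comp_const_mul (hf.contDiff) a]
  simp [mul_div_assoc]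

lemma coeffLinear (c₀ c₁ : ℂ) (n : ℕ) :
    heCoeff (fun z => c₀ + c₁ * z) n = if n = 0 then c₀ else if n = 1 then c₁ else 0 := by
  have hd : deriv (fun z => c₀ + c₁ * z) = fun _ : ℂ => c₁ := by
    funext z
    rw [deriv_const_add, deriv_const_mul _ differentiableAt_fun_id]
    simp
  unfold heCoeff
  match n with
  | 0 => simp
  | 1 => rw [iteratedDeriv_one, hd]; simp
  | (k+2) =>
    rw [show k + 2 = (k+1) + 1 from rfl, iteratedDeriv_succ', hd,
      iteratedDeriv_succ', deriv_const', iterZeroFun]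
    simp

lemma memHELinear (ξ : ℕ → ℝ) (c₀ c₁ : ℂ) : MemHE ξ (fun z => c₀ + c₁ * z) := by
  refine ⟨by fun_prop, ?_⟩
  apply summable_of_ne_finset_zero (s := {0, 1})
  intro n hn
  simp only [Finset.mem_insert, Finset.mem_singleton, not_or] at hn
  rw [coeffLinear, if_neg hn.1, if_neg hn.2]
  simp

lemma heNormSqLinear (ξ : ℕ → ℝ) (c₀ c₁ : ℂ) :
    heNormSq ξ (fun z => c₀ + c₁ * z) = ‖c₀‖ ^ 2 * (ξ 0) ^ 2 + ‖c₁‖ ^ 2 * (ξ 1) ^ 2 := by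
  unfold heNormSq
  rw [tsum_eq_sum (s := {0, 1}) ?_]
  · simp [coeffLinear]
  · intro n hn
    simp only [Finset.mem_insert, Finset.mem_singleton, not_or] at hn
    rw [coeffLinear, if_neg hn.1, if_neg hn.2]
    simp

lemma dilIso (ξ : ℕ → ℝ) (a : ℂ) (ha1 : ‖a‖ = 1) (f : ℂ → ℂ) (hf : MemHE ξ f) :
    MemHE ξ (fun z => f (a * z)) ∧ heNormSq ξ (fun z => f (a * z)) = heNormSq ξ f := by
  have key : (fun n => ‖heCoeff (fun z => f (a * z)) n‖ ^ 2 * (ξ n) ^ 2)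
      = fun n => ‖heCoeff f n‖ ^ 2 * (ξ n) ^ 2 := by
    funext n
    rw [coeffDil f hf.1 a n, norm_mul, norm_pow, ha1, one_pow, one_mul]
  refine ⟨⟨hf.1.comp (differentiable_id.const_mul a), ?_⟩, ?_⟩
  · rw [key]; exact hf.2
  · unfold heNormSq; rw [key]

/-- For bounded `C_Φ`, `Φ(z) = az + b`, `|a| ≤ 1`: `C_Φ` is an isometry
(resp. unitary) on `H_E(ξ)` iff `|a| = 1` and `b = 0`. -/
theorem stmt6 (ξ : ℕ → ℝ) (hξ : HEWeight ξ) (a b : ℂ) (ha : ‖a‖ ≤ 1)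
    (Φ : ℂ → ℂ) (hΦ : Φ = fun z => a * z + b)
    (hbd : IsBoundedHE ξ (compOp Φ)) :
    (IsIsometryHE ξ (compOp Φ) ↔ (‖a‖ = 1 ∧ b = 0)) ∧
    (IsUnitaryHE ξ (compOp Φ) ↔ (‖a‖ = 1 ∧ b = 0)) := by
  have hξ0 : 0 < ξ 0 := hξ.1 0
  have hξ1 : 0 < ξ 1 := hξ.1 1
  -- composition of Φ with a linear polynomial
  have hcomp : ∀ c₀ c₁ : ℂ, compOp Φ (fun z => c₀ + c₁ * z)
      = fun z => (c₀ + c₁ * b) + (c₁ * a) * z := by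
    intro c₀ c₁; funext z; simp [compOp, hΦ]; ring
  -- Forward: isometry → conditions
  have fwd : IsIsometryHE ξ (compOp Φ) → (‖a‖ = 1 ∧ b = 0) := by
    intro hiso
    have E : ∀ c₀ c₁ : ℂ,
        ‖c₀ + c₁ * b‖ ^ 2 * (ξ 0) ^ 2 + ‖c₁ * a‖ ^ 2 * (ξ 1) ^ 2
          = ‖c₀‖ ^ 2 * (ξ 0) ^ 2 + ‖c₁‖ ^ 2 * (ξ 1) ^ 2 := by
      intro c₀ c₁
      have := hiso.2 (fun z => c₀ + c₁ * z) (memHELinear ξ c₀ c₁)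
      rwa [hcomp, heNormSqLinear, heNormSqLinear] at this
    have E1 := E 0 1
    have E2 := E 1 1
    have E3 := E 1 Complex.I
    simp only [Complex.sq_norm, Complex.normSq_apply,
      Complex.add_re, Complex.add_im, Complex.mul_re, Complex.mul_im,
      Complex.one_re, Complex.one_im, Complex.I_re, Complex.I_im,
      Complex.zero_re, Complex.zero_im, zero_mul, one_mul, mul_zero, mul_one,
      zero_add, add_zero, zero_sub, sub_zero] at E1 E2 E3
    have h0 : (0:ℝ) < (ξ 0) ^ 2 := by positivity
    have h1 : (0:ℝ) < (ξ 1) ^ 2 := by positivity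
    have hbre : b.re = 0 := by nlinarith [E1, E2, h0]
    have hbim : b.im = 0 := by nlinarith [E1, E3, h0]
    have hb : b = 0 := Complex.ext hbre hbim
    have hna : ‖a‖ ^ 2 = a.re * a.re + a.im * a.im := by
      rw [Complex.sq_norm, Complex.normSq_apply]
    have ha2 : ‖a‖ ^ 2 = 1 := by nlinarith [E1, h1, hbre, hbim, hna]
    refine ⟨?_, hb⟩
    have hfac : (‖a‖ - 1) * (‖a‖ + 1) = 0 := by nlinarith [ha2]
    rcases mul_eq_zero.mp hfac with h | h
    · linarith
    · linarith [norm_nonneg a]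
  -- Backward: conditions → isometry
  have bwd : (‖a‖ = 1 ∧ b = 0) → IsIsometryHE ξ (compOp Φ) := by
    rintro ⟨ha1, hb⟩
    subst hb
    have hΦ' : ∀ f : ℂ → ℂ, compOp Φ f = fun z => f (a * z) := by
      intro f; funext z; simp [compOp, hΦ]
    constructor
    · intro f hf; rw [hΦ']; exact (dilIso ξ a ha1 f hf).1
    · intro f hf; rw [hΦ']; exact (dilIso ξ a ha1 f hf).2
  -- Surjectivity from the conditions
  have surj : (‖a‖ = 1 ∧ b = 0) → ∀ g, MemHE ξ g → ∃ f, MemHE ξ f ∧ compOp Φ f = g := by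
    rintro ⟨ha1, hb⟩ g hg
    subst hb
    have hane : a ≠ 0 := by
      intro h; rw [h, norm_zero] at ha1; norm_num at ha1
    have hainv : ‖a⁻¹‖ = 1 := by rw [norm_inv, ha1]; norm_num
    refine ⟨fun z => g (a⁻¹ * z), (dilIso ξ a⁻¹ hainv g hg).1, ?_⟩
    funext z
    simp only [compOp, Function.comp_apply, hΦ, add_zero]
    rw [← mul_assoc, inv_mul_cancel₀ hane, one_mul]
  constructor
  · exact ⟨fwd, bwd⟩
  · constructor
    · rintro ⟨hiso, _⟩; exact fwd hiso
    · intro h; exact ⟨bwd h, surj h⟩
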